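/- (Cocommutative bialgebra solves the Pachner (3,3)-relation.) Let V be a cocommutative bialgebra over a field k, with multiplication ∇ : V ⊗ V → V and comultiplication Δ : V → V ⊗ V satisfying σ ∘ Δ = Δ. Define Q = (id_V ⊗ ∇ ⊗ id_V) ∘ (Δ ⊗ Δ) : V ⊗ V → V^{⊗3}. Then Q satisfies the Pachner (3,3)-relation: (Q∘σ ⊗ id_V^{⊗3}) ∘ (id_V ⊗ Q ⊗ id_V) ∘ (σ ⊗ id_V^{⊗2}) ∘ (id_V ⊗ Q) = (id_V^{⊗2} ⊗ σ ⊗ id_V^{⊗2}) ∘ (id_V^{⊗3} ⊗ (Q∘σ)) ∘ (id_V ⊗ Q ⊗ id_V) ∘ (id_V^{⊗2} ⊗ σ) ∘ (Q ⊗ id_V), an equality of linear maps V^{⊗3} → V^{⊗6}. -/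

import Mathlib

open TensorProduct Coalgebra Finset

set_option maxHeartbeats 1000000
set_option synthInstance.maxHeartbeats 200000

noncomputable section

namespace Pachner33Cocomm

variable {k V : Type*} [Field k] [Ring V] [Bialgebra k V]

/-- The flip `σ : V ⊗ V → V ⊗ V`, `x ⊗ y ↦ y ⊗ x`. -/
def flip : V ⊗[k] V →ₗ[k] V ⊗[k] V := (TensorProduct.comm k V V).toLinearMap

/-- For a map `P : V ⊗ V → V^{⊗3}`, the map `P ⊗ id_W` acting on the first two
factors of a right-nested tensor product `V ⊗ (V ⊗ W)` (the appropriate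
associativity isomorphisms being inserted). -/
def front (W : Type*) [AddCommGroup W] [Module k W]
    (P : V ⊗[k] V →ₗ[k] V ⊗[k] (V ⊗[k] V)) :
    V ⊗[k] (V ⊗[k] W) →ₗ[k] V ⊗[k] (V ⊗[k] (V ⊗[k] W)) :=
  (TensorProduct.map LinearMap.id (TensorProduct.assoc k V V W).toLinearMap) ∘ₗ
    (TensorProduct.assoc k V (V ⊗[k] V) W).toLinearMap ∘ₗ
      (TensorProduct.map P LinearMap.id) ∘ₗ
        (TensorProduct.assoc k V V W).symm.toLinearMap

/-- The map `Q = (id ⊗ ∇ ⊗ id) ∘ (Δ ⊗ Δ) : V ⊗ V → V^{⊗3}` built from the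
multiplication and the comultiplication of a bialgebra. -/
def Qmap : V ⊗[k] V →ₗ[k] V ⊗[k] (V ⊗[k] V) :=
  TensorProduct.map LinearMap.id (TensorProduct.map (LinearMap.mul' k V) LinearMap.id) ∘ₗ
    TensorProduct.map LinearMap.id (TensorProduct.assoc k V V V).symm.toLinearMap ∘ₗ
      (TensorProduct.assoc k V V (V ⊗[k] V)).toLinearMap ∘ₗ
        TensorProduct.map Coalgebra.comul Coalgebra.comul

/-- repr of a product from reprs of factors -/
def mulRepr {ι₁ ι₂ : Type*} {a b : V} (ra : Coalgebra.Repr k a ι₁) (rb : Coalgebra.Repr k b ι₂) :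
    Coalgebra.Repr k (a * b) (ι₁ × ι₂) where
  index := ra.index ×ˢ rb.index
  left p := ra.left p.1 * rb.left p.2
  right p := ra.right p.1 * rb.right p.2
  eq := by
    rw [Bialgebra.comul_mul, ← ra.eq, ← rb.eq, Finset.sum_mul_sum]
    rw [Finset.sum_product]
    simp [Algebra.TensorProduct.tmul_mul_tmul]

lemma Qmap_tmul {ι₁ ι₂ : Type*} (a b : V) (ra : Coalgebra.Repr k a ι₁) (rb : Coalgebra.Repr k b ι₂) :
    Qmap (a ⊗ₜ[k] b) = ∑ i ∈ ra.index, ∑ j ∈ rb.index,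
      ra.left i ⊗ₜ[k] ((ra.right i * rb.left j) ⊗ₜ[k] rb.right j) := by
  rw [Qmap]
  simp only [LinearMap.comp_apply, TensorProduct.map_tmul, LinearMap.id_coe, id_eq,
    ← ra.eq, ← rb.eq]
  simp only [TensorProduct.sum_tmul, TensorProduct.tmul_sum, map_sum]
  rw [Finset.sum_comm]
  refine Finset.sum_congr rfl fun i _ => Finset.sum_congr rfl fun j _ => ?_
  simp

variable (hcocomm : flip ∘ₗ (Coalgebra.comul : V →ₗ[k] V ⊗[k] V) = Coalgebra.comul)

section keys
variable {T : Type*} [AddCommMonoid T] [Module k T]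

include hcocomm in
lemma swap_ctx (F : V ⊗[k] V →ₗ[k] T) {a : V} (r : Coalgebra.Repr k a (V × V)) :
    ∑ i ∈ r.index, F (r.right i ⊗ₜ[k] r.left i)
      = ∑ i ∈ r.index, F (r.left i ⊗ₜ[k] r.right i) := by
  have h : ∑ i ∈ r.index, r.right i ⊗ₜ[k] r.left i = ∑ i ∈ r.index, r.left i ⊗ₜ[k] r.right i := by
    conv_rhs => rw [r.eq, ← hcocomm]
    rw [LinearMap.comp_apply, ← r.eq, map_sum]
    simp [flip]
  simpa only [map_sum] using congrArg F h

lemma key3_ctx (F : V ⊗[k] (V ⊗[k] V) →ₗ[k] T) {a : V} (r : Coalgebra.Repr k a (V × V))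
    (r1 : ∀ i, Coalgebra.Repr k (r.left i) (V × V)) (r2 : ∀ i, Coalgebra.Repr k (r.right i) (V × V)) :
    ∑ i ∈ r.index, ∑ j ∈ (r1 i).index,
        F ((r1 i).left j ⊗ₜ[k] ((r1 i).right j ⊗ₜ[k] r.right i))
      = ∑ i ∈ r.index, ∑ j ∈ (r2 i).index,
        F (r.left i ⊗ₜ[k] ((r2 i).left j ⊗ₜ[k] (r2 i).right j)) := by
  simpa only [map_sum] using congrArg F (Coalgebra.sum_tmul_tmul_eq r r1 r2)


lemma key3_gap {κ : Type*} (s : Finset κ) (F : κ → (V ⊗[k] (V ⊗[k] V)) →ₗ[k] T)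
    {a : V} (r : Coalgebra.Repr k a (V × V))
    (r1 : ∀ i, Coalgebra.Repr k (r.left i) (V × V)) (r2 : ∀ i, Coalgebra.Repr k (r.right i) (V × V)) :
    ∑ i ∈ r.index, ∑ t ∈ s, ∑ j ∈ (r1 i).index,
        F t ((r1 i).left j ⊗ₜ[k] ((r1 i).right j ⊗ₜ[k] r.right i))
      = ∑ i ∈ r.index, ∑ t ∈ s, ∑ j ∈ (r2 i).index,
        F t (r.left i ⊗ₜ[k] ((r2 i).left j ⊗ₜ[k] (r2 i).right j)) := by
  have e1 : ∀ i ∈ r.index, ∑ t ∈ s, ∑ j ∈ (r1 i).index,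
      F t ((r1 i).left j ⊗ₜ[k] ((r1 i).right j ⊗ₜ[k] r.right i))
      = ∑ j ∈ (r1 i).index, (∑ t ∈ s, F t)
          ((r1 i).left j ⊗ₜ[k] ((r1 i).right j ⊗ₜ[k] r.right i)) := by
    intro i _
    rw [Finset.sum_comm]
    simp [LinearMap.sum_apply]
  have e2 : ∀ i ∈ r.index, ∑ t ∈ s, ∑ j ∈ (r2 i).index,
      F t (r.left i ⊗ₜ[k] ((r2 i).left j ⊗ₜ[k] (r2 i).right j))
      = ∑ j ∈ (r2 i).index, (∑ t ∈ s, F t)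
          (r.left i ⊗ₜ[k] ((r2 i).left j ⊗ₜ[k] (r2 i).right j)) := by
    intro i _
    rw [Finset.sum_comm]
    simp [LinearMap.sum_apply]
  rw [Finset.sum_congr rfl e1, Finset.sum_congr rfl e2]
  exact key3_ctx (∑ t ∈ s, F t) r r1 r2

include hcocomm in
lemma midswap (H : V ⊗[k] (V ⊗[k] V) →ₗ[k] T) {a : V} (r : Coalgebra.Repr k a (V × V))
    (rr : ∀ b, Coalgebra.Repr k (r.right b) (V × V)) :
    ∑ b ∈ r.index, ∑ c ∈ (rr b).index,
        H ((rr b).left c ⊗ₜ[k] (r.left b ⊗ₜ[k] (rr b).right c))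
      = ∑ b ∈ r.index, ∑ c ∈ (rr b).index,
        H (r.left b ⊗ₜ[k] ((rr b).left c ⊗ₜ[k] (rr b).right c)) := by
  set rl : ∀ b, Coalgebra.Repr k (r.left b) (V × V) := fun b => Coalgebra.Repr.arbitrary k (r.left b)
    with hrl
  set H' : V ⊗[k] (V ⊗[k] V) →ₗ[k] T :=
    H ∘ₗ (TensorProduct.leftComm k V V V).toLinearMap with hH'
  have step1 : ∑ b ∈ r.index, ∑ c ∈ (rr b).index,
      H ((rr b).left c ⊗ₜ[k] (r.left b ⊗ₜ[k] (rr b).right c))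
      = ∑ b ∈ r.index, ∑ c ∈ (rr b).index,
        H' (r.left b ⊗ₜ[k] ((rr b).left c ⊗ₜ[k] (rr b).right c)) := by
    refine Finset.sum_congr rfl fun b _ => Finset.sum_congr rfl fun c _ => ?_
    simp [hH', TensorProduct.leftComm_tmul]
  rw [step1, ← key3_ctx H' r rl rr]
  have step2 : ∀ b ∈ r.index, ∑ c ∈ (rl b).index,
      H' ((rl b).left c ⊗ₜ[k] ((rl b).right c ⊗ₜ[k] r.right b))
      = ∑ c ∈ (rl b).index,
        H ((rl b).left c ⊗ₜ[k] ((rl b).right c ⊗ₜ[k] r.right b)) := by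
    intro b _
    have hs := swap_ctx hcocomm
      (H ∘ₗ (TensorProduct.map LinearMap.id ((TensorProduct.mk k V V).flip (r.right b)))) (rl b)
    simp only [LinearMap.comp_apply, TensorProduct.map_tmul, LinearMap.id_coe, id_eq,
      LinearMap.flip_apply, TensorProduct.mk_apply] at hs
    calc ∑ c ∈ (rl b).index,
          H' ((rl b).left c ⊗ₜ[k] ((rl b).right c ⊗ₜ[k] r.right b))
        = ∑ c ∈ (rl b).index,
          H ((rl b).right c ⊗ₜ[k] ((rl b).left c ⊗ₜ[k] r.right b)) := by
          refine Finset.sum_congr rfl fun c _ => ?_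
          simp [hH', TensorProduct.leftComm_tmul]
      _ = ∑ c ∈ (rl b).index,
          H ((rl b).left c ⊗ₜ[k] ((rl b).right c ⊗ₜ[k] r.right b)) := hs
  rw [Finset.sum_congr rfl step2]
  exact key3_ctx H r rl rr


include hcocomm in
lemma key4_ctx (F : V ⊗[k] (V ⊗[k] (V ⊗[k] V)) →ₗ[k] T) {a : V} (r : Coalgebra.Repr k a (V × V))
    (r1 : ∀ i, Coalgebra.Repr k (r.left i) (V × V)) (r2 : ∀ i, Coalgebra.Repr k (r.right i) (V × V)) :
    ∑ j ∈ r.index, ∑ b ∈ (r2 j).index, ∑ a ∈ (r1 j).index,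
        F ((r1 j).left a ⊗ₜ[k] ((r1 j).right a ⊗ₜ[k] ((r2 j).left b ⊗ₜ[k] (r2 j).right b)))
      = ∑ j ∈ r.index, ∑ b ∈ (r2 j).index, ∑ a ∈ (r1 j).index,
        F ((r1 j).left a ⊗ₜ[k] ((r2 j).left b ⊗ₜ[k] ((r1 j).right a ⊗ₜ[k] (r2 j).right b))) := by
  set r3 : ∀ j b, Coalgebra.Repr k ((r2 j).right b) (V × V) :=
    fun j b => Coalgebra.Repr.arbitrary k ((r2 j).right b) with hr3
  set G : V ⊗[k] (V ⊗[k] V) →ₗ[k] T :=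
    F ∘ₗ (TensorProduct.map LinearMap.id
      (TensorProduct.map LinearMap.id (Coalgebra.comul (R := k)))) with hG
  set G₂ : V ⊗[k] (V ⊗[k] V) →ₗ[k] T :=
    F ∘ₗ (TensorProduct.map LinearMap.id (TensorProduct.leftComm k V V V).toLinearMap) ∘ₗ
      (TensorProduct.map LinearMap.id
        (TensorProduct.map LinearMap.id (Coalgebra.comul (R := k)))) with hG2
  have expand : ∀ (j : (V × V)) (p q : V),
      G (p ⊗ₜ[k] (q ⊗ₜ[k] r.right j))
        = ∑ b ∈ (r2 j).index, F (p ⊗ₜ[k] (q ⊗ₜ[k] ((r2 j).left b ⊗ₜ[k] (r2 j).right b))) := by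
    intro j p q
    simp only [hG, LinearMap.comp_apply, TensorProduct.map_tmul, LinearMap.id_coe, id_eq,
      ← (r2 j).eq]
    simp [TensorProduct.tmul_sum, map_sum]
  have expand2 : ∀ (j : (V × V)) (p q : V),
      G₂ (p ⊗ₜ[k] (q ⊗ₜ[k] r.right j))
        = ∑ b ∈ (r2 j).index, F (p ⊗ₜ[k] ((r2 j).left b ⊗ₜ[k] (q ⊗ₜ[k] (r2 j).right b))) := by
    intro j p q
    simp only [hG2, LinearMap.comp_apply, TensorProduct.map_tmul, LinearMap.id_coe, id_eq,
      ← (r2 j).eq]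
    simp [TensorProduct.tmul_sum, map_sum, TensorProduct.leftComm_tmul]
  have lhs1 : ∑ j ∈ r.index, ∑ b ∈ (r2 j).index, ∑ a ∈ (r1 j).index,
      F ((r1 j).left a ⊗ₜ[k] ((r1 j).right a ⊗ₜ[k] ((r2 j).left b ⊗ₜ[k] (r2 j).right b)))
      = ∑ j ∈ r.index, ∑ a ∈ (r1 j).index,
        G ((r1 j).left a ⊗ₜ[k] ((r1 j).right a ⊗ₜ[k] r.right j)) := by
    refine Finset.sum_congr rfl fun j _ => ?_
    rw [Finset.sum_comm]
    exact Finset.sum_congr rfl fun a _ => (expand j _ _).symm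
  have rhs1 : ∑ j ∈ r.index, ∑ b ∈ (r2 j).index, ∑ a ∈ (r1 j).index,
      F ((r1 j).left a ⊗ₜ[k] ((r2 j).left b ⊗ₜ[k] ((r1 j).right a ⊗ₜ[k] (r2 j).right b)))
      = ∑ j ∈ r.index, ∑ a ∈ (r1 j).index,
        G₂ ((r1 j).left a ⊗ₜ[k] ((r1 j).right a ⊗ₜ[k] r.right j)) := by
    refine Finset.sum_congr rfl fun j _ => ?_
    rw [Finset.sum_comm]
    exact Finset.sum_congr rfl fun a _ => (expand2 j _ _).symm
  rw [lhs1, rhs1, key3_ctx G r r1 r2, key3_ctx G₂ r r1 r2]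
  have lhs2 : ∀ j ∈ r.index, ∑ b ∈ (r2 j).index,
      G (r.left j ⊗ₜ[k] ((r2 j).left b ⊗ₜ[k] (r2 j).right b))
      = ∑ b ∈ (r2 j).index, ∑ c ∈ (r3 j b).index,
        F (r.left j ⊗ₜ[k] ((r2 j).left b ⊗ₜ[k] ((r3 j b).left c ⊗ₜ[k] (r3 j b).right c))) := by
    intro j _
    refine Finset.sum_congr rfl fun b _ => ?_
    simp only [hG, LinearMap.comp_apply, TensorProduct.map_tmul, LinearMap.id_coe, id_eq,
      ← (r3 j b).eq]
    simp [TensorProduct.tmul_sum, map_sum]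
  have rhs2 : ∀ j ∈ r.index, ∑ b ∈ (r2 j).index,
      G₂ (r.left j ⊗ₜ[k] ((r2 j).left b ⊗ₜ[k] (r2 j).right b))
      = ∑ b ∈ (r2 j).index, ∑ c ∈ (r3 j b).index,
        F (r.left j ⊗ₜ[k] ((r3 j b).left c ⊗ₜ[k] ((r2 j).left b ⊗ₜ[k] (r3 j b).right c))) := by
    intro j _
    refine Finset.sum_congr rfl fun b _ => ?_
    simp only [hG2, LinearMap.comp_apply, TensorProduct.map_tmul, LinearMap.id_coe, id_eq,
      ← (r3 j b).eq]
    simp [TensorProduct.tmul_sum, map_sum, TensorProduct.leftComm_tmul]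
  rw [Finset.sum_congr rfl lhs2, Finset.sum_congr rfl rhs2]
  refine Finset.sum_congr rfl fun j _ => ?_
  exact (midswap hcocomm (F ∘ₗ (TensorProduct.mk k V (V ⊗[k] (V ⊗[k] V)) (r.left j)))
    (r2 j) (r3 j)).symm


include hcocomm in
lemma key4_gap {κ : Type*} {κ' : κ → Type*} (s : Finset κ) (s' : ∀ t, Finset (κ' t))
    (F : (t : κ) → κ' t → (V ⊗[k] (V ⊗[k] (V ⊗[k] V))) →ₗ[k] T)
    {a : V} (r : Coalgebra.Repr k a (V × V))
    (r1 : ∀ i, Coalgebra.Repr k (r.left i) (V × V)) (r2 : ∀ i, Coalgebra.Repr k (r.right i) (V × V)) :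
    ∑ j ∈ r.index, ∑ t ∈ s, ∑ b ∈ (r2 j).index, ∑ u ∈ s' t, ∑ a ∈ (r1 j).index,
        F t u ((r1 j).left a ⊗ₜ[k] ((r1 j).right a ⊗ₜ[k]
          ((r2 j).left b ⊗ₜ[k] (r2 j).right b)))
      = ∑ j ∈ r.index, ∑ t ∈ s, ∑ b ∈ (r2 j).index, ∑ u ∈ s' t, ∑ a ∈ (r1 j).index,
        F t u ((r1 j).left a ⊗ₜ[k] ((r2 j).left b ⊗ₜ[k]
          ((r1 j).right a ⊗ₜ[k] (r2 j).right b))) := by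
  set G : (V ⊗[k] (V ⊗[k] (V ⊗[k] V))) →ₗ[k] T := ∑ t ∈ s, ∑ u ∈ s' t, F t u with hG
  have reorg : ∀ (j : (V × V))
      (X : (V × V) → (V × V) → V ⊗[k] (V ⊗[k] (V ⊗[k] V))),
      ∑ t ∈ s, ∑ b ∈ (r2 j).index, ∑ u ∈ s' t, ∑ a ∈ (r1 j).index, F t u (X a b)
        = ∑ b ∈ (r2 j).index, ∑ a ∈ (r1 j).index, G (X a b) := by
    intro j X
    have h1 : ∀ t ∈ s, ∑ b ∈ (r2 j).index, ∑ u ∈ s' t, ∑ a ∈ (r1 j).index, F t u (X a b)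
        = ∑ b ∈ (r2 j).index, ∑ a ∈ (r1 j).index, ∑ u ∈ s' t, F t u (X a b) := by
      intro t _
      exact Finset.sum_congr rfl fun b _ => Finset.sum_comm
    rw [Finset.sum_congr rfl h1, Finset.sum_comm]
    refine Finset.sum_congr rfl fun b _ => ?_
    rw [Finset.sum_comm]
    refine Finset.sum_congr rfl fun a _ => ?_
    simp [hG, LinearMap.sum_apply]
  calc ∑ j ∈ r.index, ∑ t ∈ s, ∑ b ∈ (r2 j).index, ∑ u ∈ s' t, ∑ a ∈ (r1 j).index,
        F t u ((r1 j).left a ⊗ₜ[k] ((r1 j).right a ⊗ₜ[k]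
          ((r2 j).left b ⊗ₜ[k] (r2 j).right b)))
      = ∑ j ∈ r.index, ∑ b ∈ (r2 j).index, ∑ a ∈ (r1 j).index,
        G ((r1 j).left a ⊗ₜ[k] ((r1 j).right a ⊗ₜ[k]
          ((r2 j).left b ⊗ₜ[k] (r2 j).right b))) :=
        Finset.sum_congr rfl fun j _ => reorg j _
    _ = ∑ j ∈ r.index, ∑ b ∈ (r2 j).index, ∑ a ∈ (r1 j).index,
        G ((r1 j).left a ⊗ₜ[k] ((r2 j).left b ⊗ₜ[k]
          ((r1 j).right a ⊗ₜ[k] (r2 j).right b))) := key4_ctx hcocomm G r r1 r2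
    _ = _ := (Finset.sum_congr rfl fun j _ => reorg j _).symm

end keys


lemma hL (x y z : V) (rx : Coalgebra.Repr k x (V × V)) (ry : Coalgebra.Repr k y (V × V))
    (rz : Coalgebra.Repr k z (V × V))
    (rx1 : ∀ i, Coalgebra.Repr k (rx.left i) (V × V)) (ry1 : ∀ j, Coalgebra.Repr k (ry.left j) (V × V))
    (ry2 : ∀ j, Coalgebra.Repr k (ry.right j) (V × V)) (rz1 : ∀ l, Coalgebra.Repr k (rz.left l) (V × V)) :
    (front (V ⊗[k] (V ⊗[k] V)) ((Qmap : V ⊗[k] V →ₗ[k] V ⊗[k] (V ⊗[k] V)) ∘ₗ flip) ∘ₗ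
        TensorProduct.map LinearMap.id (front V Qmap) ∘ₗ
          (TensorProduct.leftComm k V V (V ⊗[k] V)).toLinearMap ∘ₗ
            TensorProduct.map LinearMap.id Qmap) (x ⊗ₜ[k] (y ⊗ₜ[k] z))
    = ∑ j ∈ ry.index, ∑ l ∈ rz.index, ∑ i ∈ rx.index, ∑ b ∈ (ry2 j).index,
      ∑ m ∈ (rz1 l).index, ∑ i' ∈ (rx1 i).index, ∑ a ∈ (ry1 j).index,
        (rx1 i).left i' ⊗ₜ[k] (((rx1 i).right i' * (ry1 j).left a) ⊗ₜ[k]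
          ((ry1 j).right a ⊗ₜ[k] ((rx.right i * ((ry2 j).left b * (rz1 l).left m)) ⊗ₜ[k]
            (((ry2 j).right b * (rz1 l).right m) ⊗ₜ[k] rz.right l)))) := by
  simp only [LinearMap.comp_apply, TensorProduct.map_tmul, LinearMap.id_coe, id_eq,
    LinearEquiv.coe_coe]
  rw [Qmap_tmul y z ry rz]
  simp only [TensorProduct.tmul_sum, map_sum, TensorProduct.leftComm_tmul]
  refine Finset.sum_congr rfl fun j _ => Finset.sum_congr rfl fun l _ => ?_
  rw [TensorProduct.map_tmul]
  simp only [front, LinearMap.comp_apply, LinearEquiv.coe_coe, assoc_symm_tmul,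
    TensorProduct.map_tmul, LinearMap.id_coe, id_eq]
  rw [Qmap_tmul x (ry.right j * rz.left l) rx (mulRepr (ry2 j) (rz1 l))]
  simp only [mulRepr, Finset.sum_product, TensorProduct.sum_tmul, TensorProduct.tmul_sum,
    map_sum, LinearEquiv.coe_coe, assoc_tmul, TensorProduct.map_tmul, LinearMap.id_coe, id_eq]
  have Qrule : ∀ i : (V × V), Qmap ((rx.left i) ⊗ₜ[k] (ry.left j)) =
      ∑ i' ∈ (rx1 i).index, ∑ a ∈ (ry1 j).index,
        (rx1 i).left i' ⊗ₜ[k] (((rx1 i).right i' * (ry1 j).left a) ⊗ₜ[k] (ry1 j).right a) :=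
    fun i => Qmap_tmul _ _ (rx1 i) (ry1 j)
  refine Finset.sum_congr rfl fun i _ => Finset.sum_congr rfl fun b _ =>
    Finset.sum_congr rfl fun m _ => ?_
  simp only [assoc_symm_tmul, TensorProduct.map_tmul, LinearMap.comp_apply, flip,
    LinearEquiv.coe_coe, TensorProduct.comm_tmul, LinearMap.id_coe, id_eq, Qrule,
    TensorProduct.sum_tmul, map_sum, assoc_tmul, TensorProduct.tmul_sum]

lemma hR (x y z : V) (rx : Coalgebra.Repr k x (V × V)) (ry : Coalgebra.Repr k y (V × V))
    (rz : Coalgebra.Repr k z (V × V))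
    (rx2 : ∀ i, Coalgebra.Repr k (rx.right i) (V × V)) (ry1 : ∀ j, Coalgebra.Repr k (ry.left j) (V × V))
    (ry2 : ∀ j, Coalgebra.Repr k (ry.right j) (V × V)) (rz2 : ∀ l, Coalgebra.Repr k (rz.right l) (V × V)) :
    (TensorProduct.map LinearMap.id
            (TensorProduct.map LinearMap.id (TensorProduct.leftComm k V V (V ⊗[k] V)).toLinearMap) ∘ₗ
          TensorProduct.map LinearMap.id
              (TensorProduct.map LinearMap.id (TensorProduct.map LinearMap.id (Qmap ∘ₗ flip))) ∘ₗ
            TensorProduct.map LinearMap.id (front V Qmap) ∘ₗ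
              TensorProduct.map LinearMap.id (TensorProduct.map LinearMap.id flip) ∘ₗ
                front V Qmap) (x ⊗ₜ[k] (y ⊗ₜ[k] z))
    = ∑ i ∈ rx.index, ∑ j ∈ ry.index, ∑ i2 ∈ (rx2 i).index, ∑ a ∈ (ry1 j).index,
      ∑ l ∈ rz.index, ∑ b ∈ (ry2 j).index, ∑ m2 ∈ (rz2 l).index,
        rx.left i ⊗ₜ[k] (((rx2 i).left i2 * (ry1 j).left a) ⊗ₜ[k]
          ((ry2 j).left b ⊗ₜ[k] ((((rx2 i).right i2 * (ry1 j).right a) * rz.left l) ⊗ₜ[k]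
            (((ry2 j).right b * (rz2 l).left m2) ⊗ₜ[k] (rz2 l).right m2)))) := by
  simp only [LinearMap.comp_apply]
  rw [show (front V Qmap) (x ⊗ₜ[k] (y ⊗ₜ[k] z)) = (TensorProduct.map LinearMap.id
      (TensorProduct.assoc k V V V).toLinearMap) ((TensorProduct.assoc k V (V ⊗[k] V) V)
      ((Qmap (x ⊗ₜ[k] y)) ⊗ₜ[k] z)) from by
    simp [front, LinearMap.comp_apply, LinearEquiv.coe_coe, assoc_symm_tmul]]
  rw [Qmap_tmul x y rx ry]
  simp only [TensorProduct.sum_tmul, map_sum, LinearEquiv.coe_coe, assoc_tmul,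
    TensorProduct.map_tmul, LinearMap.id_coe, id_eq, flip, TensorProduct.comm_tmul]
  refine Finset.sum_congr rfl fun i _ => Finset.sum_congr rfl fun j _ => ?_
  simp only [front, LinearMap.comp_apply, LinearEquiv.coe_coe, assoc_symm_tmul,
    TensorProduct.map_tmul, LinearMap.id_coe, id_eq]
  rw [Qmap_tmul (rx.right i * ry.left j) z (mulRepr (rx2 i) (ry1 j)) rz]
  simp only [mulRepr, Finset.sum_product, TensorProduct.sum_tmul, TensorProduct.tmul_sum,
    map_sum, LinearEquiv.coe_coe, assoc_tmul, TensorProduct.map_tmul, LinearMap.id_coe, id_eq,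
    flip, TensorProduct.comm_tmul]
  have Qrule : ∀ l : (V × V), Qmap ((ry.right j) ⊗ₜ[k] (rz.right l)) =
      ∑ b ∈ (ry2 j).index, ∑ m2 ∈ (rz2 l).index,
        (ry2 j).left b ⊗ₜ[k] (((ry2 j).right b * (rz2 l).left m2) ⊗ₜ[k] (rz2 l).right m2) :=
    fun l => Qmap_tmul _ _ (ry2 j) (rz2 l)
  refine Finset.sum_congr rfl fun i2 _ => Finset.sum_congr rfl fun a _ =>
    Finset.sum_congr rfl fun l _ => ?_
  simp only [LinearMap.comp_apply, LinearEquiv.coe_coe, TensorProduct.comm_tmul, Qrule,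
    TensorProduct.tmul_sum, map_sum, TensorProduct.leftComm_tmul]

section maps
variable (k V)
/-- target: six-fold tensor -/
abbrev T6 := V ⊗[k] (V ⊗[k] (V ⊗[k] (V ⊗[k] (V ⊗[k] V))))
end maps

def PhiX (u v w : V) (c : V ⊗[k] V) : V ⊗[k] (V ⊗[k] V) →ₗ[k] T6 k V :=
  TensorProduct.map LinearMap.id (TensorProduct.map (LinearMap.mulRight k u)
    ((TensorProduct.mk k V (V ⊗[k] (V ⊗[k] V)) v) ∘ₗ
      ((TensorProduct.mk k V (V ⊗[k] V)).flip c) ∘ₗ (LinearMap.mulRight k w)))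

@[simp] lemma PhiX_tmul (u v w p q s : V) (c : V ⊗[k] V) :
    PhiX u v w c (p ⊗ₜ[k] (q ⊗ₜ[k] s))
      = p ⊗ₜ[k] ((q * u) ⊗ₜ[k] (v ⊗ₜ[k] ((s * w) ⊗ₜ[k] c))) := by
  simp [PhiX]

def PsiZ (c0 c1 c2 : V) (f g : V →ₗ[k] V) : V ⊗[k] (V ⊗[k] V) →ₗ[k] T6 k V :=
  ((TensorProduct.mk k V (V ⊗[k] (V ⊗[k] (V ⊗[k] (V ⊗[k] V))))) c0) ∘ₗ
    ((TensorProduct.mk k V (V ⊗[k] (V ⊗[k] (V ⊗[k] V)))) c1) ∘ₗ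
      ((TensorProduct.mk k V (V ⊗[k] (V ⊗[k] V))) c2) ∘ₗ
        TensorProduct.map f (TensorProduct.map g LinearMap.id)

@[simp] lemma PsiZ_tmul (c0 c1 c2 p q s : V) (f g : V →ₗ[k] V) :
    PsiZ c0 c1 c2 f g (p ⊗ₜ[k] (q ⊗ₜ[k] s))
      = c0 ⊗ₜ[k] (c1 ⊗ₜ[k] (c2 ⊗ₜ[k] (f p ⊗ₜ[k] (g q ⊗ₜ[k] s)))) := by
  simp [PsiZ]

def ThetaY (c0 : V) (f g : V →ₗ[k] V) (h : V →ₗ[k] V ⊗[k] V) :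
    V ⊗[k] (V ⊗[k] (V ⊗[k] V)) →ₗ[k] T6 k V :=
  ((TensorProduct.mk k V (V ⊗[k] (V ⊗[k] (V ⊗[k] (V ⊗[k] V))))) c0) ∘ₗ
    TensorProduct.map f (TensorProduct.map LinearMap.id (TensorProduct.map g h))

@[simp] lemma ThetaY_tmul (c0 p q r s : V) (f g : V →ₗ[k] V) (h : V →ₗ[k] V ⊗[k] V) :
    ThetaY c0 f g h (p ⊗ₜ[k] (q ⊗ₜ[k] (r ⊗ₜ[k] s)))
      = c0 ⊗ₜ[k] (f p ⊗ₜ[k] (q ⊗ₜ[k] (g r ⊗ₜ[k] h s))) := by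
  simp [ThetaY]

lemma stepX (x y z : V) (rx : Coalgebra.Repr k x (V × V)) (ry : Coalgebra.Repr k y (V × V))
    (rz : Coalgebra.Repr k z (V × V))
    (rx1 : ∀ i, Coalgebra.Repr k (rx.left i) (V × V)) (rx2 : ∀ i, Coalgebra.Repr k (rx.right i) (V × V))
    (ry1 : ∀ j, Coalgebra.Repr k (ry.left j) (V × V))
    (ry2 : ∀ j, Coalgebra.Repr k (ry.right j) (V × V)) (rz1 : ∀ l, Coalgebra.Repr k (rz.left l) (V × V)) :
    (∑ j ∈ ry.index, ∑ l ∈ rz.index, ∑ i ∈ rx.index, ∑ b ∈ (ry2 j).index,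
      ∑ m ∈ (rz1 l).index, ∑ i' ∈ (rx1 i).index, ∑ a ∈ (ry1 j).index,
        (rx1 i).left i' ⊗ₜ[k] (((rx1 i).right i' * (ry1 j).left a) ⊗ₜ[k]
          ((ry1 j).right a ⊗ₜ[k] ((rx.right i * ((ry2 j).left b * (rz1 l).left m)) ⊗ₜ[k]
            (((ry2 j).right b * (rz1 l).right m) ⊗ₜ[k] rz.right l)))))
    = ∑ j ∈ ry.index, ∑ l ∈ rz.index, ∑ i ∈ rx.index, ∑ b ∈ (ry2 j).index,
      ∑ m ∈ (rz1 l).index, ∑ i2 ∈ (rx2 i).index, ∑ a ∈ (ry1 j).index,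
        rx.left i ⊗ₜ[k] ((((rx2 i).left i2) * (ry1 j).left a) ⊗ₜ[k]
          ((ry1 j).right a ⊗ₜ[k] (((rx2 i).right i2 * ((ry2 j).left b * (rz1 l).left m)) ⊗ₜ[k]
            (((ry2 j).right b * (rz1 l).right m) ⊗ₜ[k] rz.right l)))) := by
  refine Finset.sum_congr rfl fun j _ => Finset.sum_congr rfl fun l _ => ?_
  have h := key3_gap (T := T6 k V) ((ry2 j).index ×ˢ (rz1 l).index)
    (fun t : (V × V) × (V × V) => ∑ a ∈ (ry1 j).index,
      PhiX ((ry1 j).left a) ((ry1 j).right a) ((ry2 j).left t.1 * (rz1 l).left t.2)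
        ((((ry2 j).right t.1 * (rz1 l).right t.2)) ⊗ₜ[k] rz.right l))
    rx rx1 rx2
  simpa only [Finset.sum_product, LinearMap.sum_apply, PhiX_tmul] using h

lemma stepZ (x y z : V) (rx : Coalgebra.Repr k x (V × V)) (ry : Coalgebra.Repr k y (V × V))
    (rz : Coalgebra.Repr k z (V × V))
    (rx2 : ∀ i, Coalgebra.Repr k (rx.right i) (V × V))
    (ry1 : ∀ j, Coalgebra.Repr k (ry.left j) (V × V))
    (ry2 : ∀ j, Coalgebra.Repr k (ry.right j) (V × V)) (rz1 : ∀ l, Coalgebra.Repr k (rz.left l) (V × V))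
    (rz2 : ∀ l, Coalgebra.Repr k (rz.right l) (V × V)) :
    (∑ j ∈ ry.index, ∑ l ∈ rz.index, ∑ i ∈ rx.index, ∑ b ∈ (ry2 j).index,
      ∑ m ∈ (rz1 l).index, ∑ i2 ∈ (rx2 i).index, ∑ a ∈ (ry1 j).index,
        rx.left i ⊗ₜ[k] ((((rx2 i).left i2) * (ry1 j).left a) ⊗ₜ[k]
          ((ry1 j).right a ⊗ₜ[k] (((rx2 i).right i2 * ((ry2 j).left b * (rz1 l).left m)) ⊗ₜ[k]
            (((ry2 j).right b * (rz1 l).right m) ⊗ₜ[k] rz.right l)))))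
    = ∑ j ∈ ry.index, ∑ l ∈ rz.index, ∑ i ∈ rx.index, ∑ b ∈ (ry2 j).index,
      ∑ m2 ∈ (rz2 l).index, ∑ i2 ∈ (rx2 i).index, ∑ a ∈ (ry1 j).index,
        rx.left i ⊗ₜ[k] ((((rx2 i).left i2) * (ry1 j).left a) ⊗ₜ[k]
          ((ry1 j).right a ⊗ₜ[k] (((rx2 i).right i2 * ((ry2 j).left b * rz.left l)) ⊗ₜ[k]
            (((ry2 j).right b * (rz2 l).left m2) ⊗ₜ[k] (rz2 l).right m2)))) := by
  refine Finset.sum_congr rfl fun j _ => ?_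
  have h := key3_gap (T := T6 k V) (rx.index ×ˢ (ry2 j).index)
    (fun t : (V × V) × (V × V) => ∑ i2 ∈ (rx2 t.1).index, ∑ a ∈ (ry1 j).index,
      PsiZ (rx.left t.1) ((rx2 t.1).left i2 * (ry1 j).left a) ((ry1 j).right a)
        ((LinearMap.mulLeft k ((rx2 t.1).right i2)) ∘ₗ (LinearMap.mulLeft k ((ry2 j).left t.2)))
        (LinearMap.mulLeft k ((ry2 j).right t.2)))
    rz rz1 rz2
  simpa only [Finset.sum_product, LinearMap.sum_apply, PsiZ_tmul, LinearMap.comp_apply,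
    LinearMap.mulLeft_apply] using h

include hcocomm in
lemma stepY (x y z : V) (rx : Coalgebra.Repr k x (V × V)) (ry : Coalgebra.Repr k y (V × V))
    (rz : Coalgebra.Repr k z (V × V))
    (rx2 : ∀ i, Coalgebra.Repr k (rx.right i) (V × V))
    (ry1 : ∀ j, Coalgebra.Repr k (ry.left j) (V × V))
    (ry2 : ∀ j, Coalgebra.Repr k (ry.right j) (V × V))
    (rz2 : ∀ l, Coalgebra.Repr k (rz.right l) (V × V)) :
    (∑ j ∈ ry.index, ∑ l ∈ rz.index, ∑ i ∈ rx.index, ∑ b ∈ (ry2 j).index,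
      ∑ m2 ∈ (rz2 l).index, ∑ i2 ∈ (rx2 i).index, ∑ a ∈ (ry1 j).index,
        rx.left i ⊗ₜ[k] ((((rx2 i).left i2) * (ry1 j).left a) ⊗ₜ[k]
          ((ry1 j).right a ⊗ₜ[k] (((rx2 i).right i2 * ((ry2 j).left b * rz.left l)) ⊗ₜ[k]
            (((ry2 j).right b * (rz2 l).left m2) ⊗ₜ[k] (rz2 l).right m2)))))
    = ∑ j ∈ ry.index, ∑ l ∈ rz.index, ∑ i ∈ rx.index, ∑ b ∈ (ry2 j).index,
      ∑ m2 ∈ (rz2 l).index, ∑ i2 ∈ (rx2 i).index, ∑ a ∈ (ry1 j).index,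
        rx.left i ⊗ₜ[k] ((((rx2 i).left i2) * (ry1 j).left a) ⊗ₜ[k]
          (((ry2 j).left b) ⊗ₜ[k] (((rx2 i).right i2 * ((ry1 j).right a * rz.left l)) ⊗ₜ[k]
            (((ry2 j).right b * (rz2 l).left m2) ⊗ₜ[k] (rz2 l).right m2)))) := by
  have h := key4_gap hcocomm (T := T6 k V) (rz.index ×ˢ rx.index)
    (fun t : (V × V) × (V × V) => (rz2 t.1).index ×ˢ (rx2 t.2).index)
    (fun (t : (V × V) × (V × V)) (u : (V × V) × (V × V)) =>
      ThetaY (rx.left t.2) (LinearMap.mulLeft k ((rx2 t.2).left u.2))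
      ((LinearMap.mulLeft k ((rx2 t.2).right u.2)) ∘ₗ (LinearMap.mulRight k (rz.left t.1)))
      (((TensorProduct.mk k V V).flip ((rz2 t.1).right u.1)) ∘ₗ
        (LinearMap.mulRight k ((rz2 t.1).left u.1))))
    ry ry1 ry2
  simpa only [Finset.sum_product, ThetaY_tmul, LinearMap.comp_apply,
    LinearMap.mulLeft_apply, LinearMap.mulRight_apply, LinearMap.flip_apply,
    TensorProduct.mk_apply] using h

/-- A cocommutative bialgebra solves the Pachner (3,3)-relation via
`Q = (id ⊗ ∇ ⊗ id) ∘ (Δ ⊗ Δ)`. -/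
theorem pachner33_of_cocommutative_bialgebra
    (hcocomm : flip ∘ₗ (Coalgebra.comul : V →ₗ[k] V ⊗[k] V) = Coalgebra.comul) :
    front (V ⊗[k] (V ⊗[k] V)) ((Qmap : V ⊗[k] V →ₗ[k] V ⊗[k] (V ⊗[k] V)) ∘ₗ flip) ∘ₗ
        TensorProduct.map LinearMap.id (front V Qmap) ∘ₗ
          (TensorProduct.leftComm k V V (V ⊗[k] V)).toLinearMap ∘ₗ
            TensorProduct.map LinearMap.id Qmap
      = TensorProduct.map LinearMap.id
            (TensorProduct.map LinearMap.id (TensorProduct.leftComm k V V (V ⊗[k] V)).toLinearMap) ∘ₗ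
          TensorProduct.map LinearMap.id
              (TensorProduct.map LinearMap.id (TensorProduct.map LinearMap.id (Qmap ∘ₗ flip))) ∘ₗ
            TensorProduct.map LinearMap.id (front V Qmap) ∘ₗ
              TensorProduct.map LinearMap.id (TensorProduct.map LinearMap.id flip) ∘ₗ
                front V Qmap := by
  ext x y z
  simp only [TensorProduct.AlgebraTensorModule.curry_apply, TensorProduct.curry_apply,
    LinearMap.coe_restrictScalars]
  rw [hL x y z (Coalgebra.Repr.arbitrary k x) (Coalgebra.Repr.arbitrary k y)
      (Coalgebra.Repr.arbitrary k z)
      (fun i => Coalgebra.Repr.arbitrary k _) (fun j => Coalgebra.Repr.arbitrary k _)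
      (fun j => Coalgebra.Repr.arbitrary k _) (fun l => Coalgebra.Repr.arbitrary k _),
    hR x y z (Coalgebra.Repr.arbitrary k x) (Coalgebra.Repr.arbitrary k y)
      (Coalgebra.Repr.arbitrary k z)
      (fun i => Coalgebra.Repr.arbitrary k _) (fun j => Coalgebra.Repr.arbitrary k _)
      (fun j => Coalgebra.Repr.arbitrary k _) (fun l => Coalgebra.Repr.arbitrary k _),
    stepX x y z _ _ _ _ (fun i => Coalgebra.Repr.arbitrary k _) _ _ _,
    stepZ x y z _ _ _ _ _ _ _ (fun l => Coalgebra.Repr.arbitrary k _),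
    stepY hcocomm x y z _ _ _ _ _ _ _]
  simp only [mul_assoc]
  conv_lhs => enter [2, j]; rw [Finset.sum_comm]
  conv_lhs => rw [Finset.sum_comm]
  conv_lhs => enter [2, i, 2, j, 2, l, 2, b]; rw [Finset.sum_comm]
  conv_lhs => enter [2, i, 2, j, 2, l]; rw [Finset.sum_comm]
  conv_lhs => enter [2, i, 2, j]; rw [Finset.sum_comm]
  conv_lhs => enter [2, i, 2, j, 2, i2, 2, l, 2, b]; rw [Finset.sum_comm]
  conv_lhs => enter [2, i, 2, j, 2, i2, 2, l]; rw [Finset.sum_comm]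
  conv_lhs => enter [2, i, 2, j, 2, i2]; rw [Finset.sum_comm]


end Pachner33Cocomm
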